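/- arXiv:2605.17827 — 2 statements merged into one kernel-verified Lean document; each statement's English description precedes it below -/
import Mathlib

section
/- Let (Ω, μ) be a probability space and let v : Ω → ℝ^d be a random vector such that for all indices i, j the product v_i v_j is integrable and E[v_i v_j] equals 1 if i = j and 0 otherwise. Then for any matrices A ∈ ℝ^{d×p}, B ∈ ℝ^{d×q} and any ε ≥ 0, the stochastic estimator of the differential-independence regularizer equals the exact ratio: ‖E_v[(Bᵀ v)(Aᵀ v)ᵀ]‖_F² / (E_v[‖Aᵀ v‖₂²] · E_v[‖Bᵀ v‖₂²] + ε) = ‖Bᵀ A‖_F² / (‖A‖_F² ‖B‖_F² + ε), where the matrix E_v[(Bᵀ v)(Aᵀ v)ᵀ] ∈ ℝ^{q×p} is formed entrywise by expectations. -/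
open MeasureTheory Matrix

private lemma key_int
    {Ω : Type*} [MeasurableSpace Ω] (μ : Measure Ω)
    {d : ℕ} (v : Ω → Fin d → ℝ)
    (hint : ∀ i j : Fin d, Integrable (fun ω => v ω i * v ω j) μ)
    (w u : Fin d → ℝ) :
    Integrable (fun ω => (∑ i, w i * v ω i) * (∑ j, u j * v ω j)) μ := by
  have h : (fun ω => (∑ i, w i * v ω i) * (∑ j, u j * v ω j))
      = fun ω => ∑ i, ∑ j, (w i * u j) * (v ω i * v ω j) := by
    funext ω
    rw [Finset.sum_mul_sum]
    refine Finset.sum_congr rfl fun i _ => Finset.sum_congr rfl fun j _ => by ring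
  rw [h]
  exact integrable_finset_sum _ fun i _ =>
    integrable_finset_sum _ fun j _ => (hint i j).const_mul _

private lemma key
    {Ω : Type*} [MeasurableSpace Ω] (μ : Measure Ω)
    {d : ℕ} (v : Ω → Fin d → ℝ)
    (hint : ∀ i j : Fin d, Integrable (fun ω => v ω i * v ω j) μ)
    (hmom : ∀ i j : Fin d, ∫ ω, v ω i * v ω j ∂μ = if i = j then (1 : ℝ) else 0)
    (w u : Fin d → ℝ) :
    ∫ ω, (∑ i, w i * v ω i) * (∑ j, u j * v ω j) ∂μ = ∑ i, w i * u i := by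
  have h : (fun ω => (∑ i, w i * v ω i) * (∑ j, u j * v ω j))
      = fun ω => ∑ i, ∑ j, (w i * u j) * (v ω i * v ω j) := by
    funext ω
    rw [Finset.sum_mul_sum]
    refine Finset.sum_congr rfl fun i _ => Finset.sum_congr rfl fun j _ => by ring
  rw [h, integral_finset_sum _ (fun i _ =>
    integrable_finset_sum _ fun j _ => (hint i j).const_mul _)]
  have : ∀ i : Fin d, ∫ ω, ∑ j, (w i * u j) * (v ω i * v ω j) ∂μ
      = ∑ j, (w i * u j) * (if i = j then (1:ℝ) else 0) := by
    intro i
    rw [integral_finset_sum _ (fun j _ => (hint i j).const_mul _)]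
    exact Finset.sum_congr rfl fun j _ => by rw [MeasureTheory.integral_const_mul, hmom]
  simp only [this, mul_ite, mul_one, mul_zero]
  exact Finset.sum_congr rfl fun i _ => by simp

/-- The stochastic (noise-probing) estimator of the differential-independence
regularizer equals the exact normalized cross-Gram ratio:
`‖E_v[(Bᵀv)(Aᵀv)ᵀ]‖_F² / (E_v[‖Aᵀv‖₂²]·E_v[‖Bᵀv‖₂²] + ε)
  = ‖BᵀA‖_F² / (‖A‖_F²‖B‖_F² + ε)`. -/
theorem hutchinson_regularizer_exact
    {Ω : Type*} [MeasurableSpace Ω] (μ : Measure Ω) [IsProbabilityMeasure μ]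
    (d p q : ℕ) (v : Ω → Fin d → ℝ)
    (hint : ∀ i j : Fin d, Integrable (fun ω => v ω i * v ω j) μ)
    (hmom : ∀ i j : Fin d, ∫ ω, v ω i * v ω j ∂μ = if i = j then (1 : ℝ) else 0)
    (A : Matrix (Fin d) (Fin p) ℝ) (B : Matrix (Fin d) (Fin q) ℝ)
    (ε : ℝ) (hε : 0 ≤ ε) :
    (∑ k, ∑ l, (∫ ω, (Bᵀ.mulVec (v ω)) k * (Aᵀ.mulVec (v ω)) l ∂μ) ^ 2) /
        ((∫ ω, ∑ l, (Aᵀ.mulVec (v ω) l) ^ 2 ∂μ) *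
          (∫ ω, ∑ k, (Bᵀ.mulVec (v ω) k) ^ 2 ∂μ) + ε) =
      (∑ k, ∑ l, ((Bᵀ * A) k l) ^ 2) /
        ((∑ i, ∑ l, (A i l) ^ 2) * (∑ i, ∑ k, (B i k) ^ 2) + ε) := by
  have hmv : ∀ (n : ℕ) (M : Matrix (Fin d) (Fin n) ℝ) (ω : Ω) (k : Fin n),
      Mᵀ.mulVec (v ω) k = ∑ i, M i k * v ω i := by
    intro n M ω k
    simp [Matrix.mulVec, dotProduct, Matrix.transpose_apply]
  -- numerator
  have hnum : ∀ (k : Fin q) (l : Fin p),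
      ∫ ω, (Bᵀ.mulVec (v ω)) k * (Aᵀ.mulVec (v ω)) l ∂μ = (Bᵀ * A) k l := by
    intro k l
    have := key μ v hint hmom (fun i => B i k) (fun i => A i l)
    simp only [hmv] at *
    rw [this]
    simp [Matrix.mul_apply, Matrix.transpose_apply]
  -- denominator A
  have hA : ∫ ω, ∑ l, (Aᵀ.mulVec (v ω) l) ^ 2 ∂μ = ∑ i, ∑ l, (A i l) ^ 2 := by
    have hi : ∀ l : Fin p, Integrable (fun ω => (Aᵀ.mulVec (v ω) l) ^ 2) μ := by
      intro l
      have := key_int μ v hint (fun i => A i l) (fun i => A i l)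
      simpa [hmv, sq] using this
    rw [integral_finset_sum _ (fun l _ => hi l), Finset.sum_comm]
    refine Finset.sum_congr rfl fun l _ => ?_
    have := key μ v hint hmom (fun i => A i l) (fun i => A i l)
    simp only [hmv] at *
    simp only [sq]
    rw [this]
  have hB : ∫ ω, ∑ k, (Bᵀ.mulVec (v ω) k) ^ 2 ∂μ = ∑ i, ∑ k, (B i k) ^ 2 := by
    have hi : ∀ k : Fin q, Integrable (fun ω => (Bᵀ.mulVec (v ω) k) ^ 2) μ := by
      intro k
      have := key_int μ v hint (fun i => B i k) (fun i => B i k)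
      simpa [hmv, sq] using this
    rw [integral_finset_sum _ (fun k _ => hi k), Finset.sum_comm]
    refine Finset.sum_congr rfl fun k _ => ?_
    have := key μ v hint hmom (fun i => B i k) (fun i => B i k)
    simp only [hmv] at *
    simp only [sq]
    rw [this]
  simp only [hnum, hA, hB]
end

section
/- Let E be a finite-dimensional real inner product space, let C and S be subspaces of E with orthogonal projections P_C and P_S (as linear maps E → E), and let κ ≥ 0 satisfy ‖P_S ∘ P_C‖ ≤ κ in operator norm. Let F_C and F_S be finite-dimensional real normed spaces, and suppose: (i) G : F_C → E is a linear map whose range is contained in C; (ii) B : F_S → E is a linear map whose range is contained in S and there exists c > 0 with ‖B y‖ ≥ c ‖y‖ for all y ∈ F_S; (iii) X : F_C → F_S and E₀ : F_C → E are linear maps with P_S ∘ E₀ = 0 and G = B ∘ X + E₀. Then c · ‖X‖ ≤ κ · ‖G‖, i.e. ‖X‖ ≤ (κ / c) ‖G‖ in operator norm. -/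
/-- Linear-algebraic core of the robustness theorem: if `‖P_S ∘ P_C‖ ≤ κ`, the range of
`G` lies in `C`, the range of `B` lies in `S` with `‖B y‖ ≥ c ‖y‖`, `P_S ∘ E₀ = 0`, and
`G = B ∘ X + E₀`, then `c ‖X‖ ≤ κ ‖G‖`. -/
theorem robustness_core
    {E : Type*} [NormedAddCommGroup E] [InnerProductSpace ℝ E] [FiniteDimensional ℝ E]
    {FC FS : Type*}
    [NormedAddCommGroup FC] [NormedSpace ℝ FC] [FiniteDimensional ℝ FC]
    [NormedAddCommGroup FS] [NormedSpace ℝ FS] [FiniteDimensional ℝ FS]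
    (C S : Submodule ℝ E) (κ : ℝ) (hκ : 0 ≤ κ)
    (hPSC : ‖(S.subtypeL.comp S.orthogonalProjectionOnto).comp
        (C.subtypeL.comp C.orthogonalProjectionOnto)‖ ≤ κ)
    (G : FC →L[ℝ] E) (hG : ∀ x, G x ∈ C)
    (B : FS →L[ℝ] E) (hB : ∀ y, B y ∈ S)
    (c : ℝ) (hc : 0 < c) (hBlow : ∀ y : FS, c * ‖y‖ ≤ ‖B y‖)
    (X : FC →L[ℝ] FS) (E₀ : FC →L[ℝ] E)
    (hE₀ : (S.subtypeL.comp S.orthogonalProjectionOnto).comp E₀ = 0)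
    (hdecomp : G = B.comp X + E₀) :
    c * ‖X‖ ≤ κ * ‖G‖ := by
  set PS := S.subtypeL.comp S.orthogonalProjectionOnto with hPS
  set PC := C.subtypeL.comp C.orthogonalProjectionOnto with hPC
  have key : ∀ x : FC, c * ‖X x‖ ≤ κ * ‖G‖ * ‖x‖ := by
    intro x
    have hPSG : PS (G x) = B (X x) := by
      have h1 : PS (E₀ x) = 0 := by
        simpa using congrArg (fun f => f x) hE₀
      have h2 : PS (B (X x)) = B (X x) := by
        simp only [hPS, ContinuousLinearMap.comp_apply, Submodule.subtypeL_apply]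
        exact S.starProjection_eq_self_iff.mpr (hB (X x))
      rw [hdecomp]
      simp only [ContinuousLinearMap.add_apply, ContinuousLinearMap.comp_apply, map_add] at *
      rw [h2, h1, add_zero]
    have hPCG : PC (G x) = G x := by
      simp only [hPC, ContinuousLinearMap.comp_apply, Submodule.subtypeL_apply]
      exact C.starProjection_eq_self_iff.mpr (hG x)
    calc c * ‖X x‖ ≤ ‖B (X x)‖ := hBlow (X x)
      _ = ‖(PS.comp PC) (G x)‖ := by rw [ContinuousLinearMap.comp_apply, hPCG, hPSG]
      _ ≤ κ * ‖G x‖ := (PS.comp PC).le_of_opNorm_le hPSC (G x)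
      _ ≤ κ * (‖G‖ * ‖x‖) := by
          exact mul_le_mul_of_nonneg_left (G.le_opNorm x) hκ
      _ = κ * ‖G‖ * ‖x‖ := by ring
  have hXle : ‖X‖ ≤ κ * ‖G‖ / c := by
    apply ContinuousLinearMap.opNorm_le_bound _ (by positivity) fun x => ?_
    rw [div_mul_eq_mul_div, le_div_iff₀ hc]
    nlinarith [key x]
  have := (le_div_iff₀ hc).mp hXle
  linarith
end
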